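/- Every element of G of cycle type [2,2,2] has even S3×S3-parity, and every element of G of cycle type [3,3] that exchanges no labels between {r,g,b} and {x,y,z} has even S3×S3-parity; hence no sequence of multiplications by cycle-type-[2,2,2] elements can connect an element of G of odd S3×S3-parity to one of even S3×S3-parity. -/

import Mathlib

/-- Permutations of the six labels `{r,g,b,x,y,z}` (encoded as `0,...,5`) that fix the
flavor labels `x,y,z` (indices `3,4,5`) pointwise, hence permute the colors
`r,g,b` (indices `0,1,2`) arbitrarily. -/
def colorPerms : Set (Equiv.Perm (Fin 6)) := {g | ∀ i : Fin 6, 3 ≤ (i : ℕ) → g i = i}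

/-- Permutations fixing the color labels `r,g,b` (indices `0,1,2`) pointwise,
hence permuting the flavors `x,y,z` arbitrarily. -/
def flavorPerms : Set (Equiv.Perm (Fin 6)) := {g | ∀ i : Fin 6, (i : ℕ) < 3 → g i = i}

/-- The color-flavor swap `(r x)(g y)(b z)`. -/
def cfSwap : Equiv.Perm (Fin 6) := Equiv.swap 0 3 * Equiv.swap 1 4 * Equiv.swap 2 5

/-- The color code automorphism group: the subgroup of `S₆` generated by color
permutations, flavor permutations, and the color-flavor swap. -/
def ccAut : Subgroup (Equiv.Perm (Fin 6)) :=
  Subgroup.closure (colorPerms ∪ flavorPerms ∪ {cfSwap})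

/-- The `S₃ × S₃`-parity of a permutation `g`: the sign of `g` itself if `g` preserves the
color set `{r,g,b}`, and otherwise the sign of `(r x)(g y)(b z) · g` (which then preserves
the color set, i.e. lies in `S₃ × S₃`). -/
def s3s3Parity (g : Equiv.Perm (Fin 6)) : ℤˣ :=
  if ∀ i : Fin 6, (i : ℕ) < 3 → ((g i : ℕ) < 3) then Equiv.Perm.sign g
  else Equiv.Perm.sign (cfSwap * g)


/-- `g` preserves the color block `{0,1,2}` (and hence the flavor block). -/
def BPres (g : Equiv.Perm (Fin 6)) : Prop := ∀ i : Fin 6, (i : ℕ) < 3 ↔ ((g i : ℕ) < 3)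

/-- `g` swaps the color block with the flavor block. -/
def BSwap (g : Equiv.Perm (Fin 6)) : Prop := ∀ i : Fin 6, (i : ℕ) < 3 ↔ ¬ ((g i : ℕ) < 3)

def Resp (g : Equiv.Perm (Fin 6)) : Prop := BPres g ∨ BSwap g

lemma resp_mul {g h : Equiv.Perm (Fin 6)} (hg : Resp g) (hh : Resp h) : Resp (g * h) := by
  rcases hg with hg | hg <;> rcases hh with hh | hh <;>
    [left; right; right; left] <;>
    · intro i
      rw [Equiv.Perm.mul_apply]
      have h1 := hg (h i)
      have h2 := hh i
      tauto

lemma resp_one : Resp 1 := Or.inl fun i => by rfl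

lemma resp_inv {g : Equiv.Perm (Fin 6)} (hg : Resp g) : Resp g⁻¹ := by
  rcases hg with hg | hg <;> [left; right] <;>
    · intro i
      have h1 := hg (g⁻¹ i)
      rw [← Equiv.Perm.mul_apply, mul_inv_cancel, Equiv.Perm.one_apply] at h1
      tauto

lemma resp_mem {g : Equiv.Perm (Fin 6)} (hg : g ∈ ccAut) : Resp g := by
  induction hg using Subgroup.closure_induction with
  | mem x hx =>
    rcases hx with (hx | hx) | hx
    · left
      intro i
      constructor
      · intro hi
        by_contra h
        push_neg at h
        have h2 : x (x i) = x i := hx (x i) h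
        have h3 : x i = i := x.injective h2
        rw [h3] at h
        omega
      · intro hi
        by_contra h
        push_neg at h
        have h2 : x i = i := hx i h
        rw [h2] at hi
        omega
    · left
      intro i
      constructor
      · intro hi
        rw [hx i hi]
        exact hi
      · intro hi
        by_contra h
        push_neg at h
        have h2 : x (x i) = x i := hx (x i) hi
        have h3 : x i = i := x.injective h2
        rw [h3] at hi
        omega
    · rcases hx with rfl
      right
      intro i
      fin_cases i <;> decide
  | one => exact resp_one
  | mul x y hx hy ihx ihy => exact resp_mul ihx ihy
  | inv x hx ihx => exact resp_inv ihx

lemma parity_pres {g : Equiv.Perm (Fin 6)} (hg : BPres g) :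
    s3s3Parity g = Equiv.Perm.sign g := by
  rw [s3s3Parity, if_pos]
  intro i hi
  exact (hg i).1 hi

lemma parity_swap {g : Equiv.Perm (Fin 6)} (hg : BSwap g) :
    s3s3Parity g = Equiv.Perm.sign cfSwap * Equiv.Perm.sign g := by
  rw [s3s3Parity, if_neg, map_mul]
  intro h
  exact (hg 0).1 (by decide) (h 0 (by decide))

lemma sign_cfSwap : Equiv.Perm.sign cfSwap = -1 := by
  rw [cfSwap, map_mul, map_mul, Equiv.Perm.sign_swap (by decide),
    Equiv.Perm.sign_swap (by decide), Equiv.Perm.sign_swap (by decide)]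
  rfl

lemma parity_mul {g h : Equiv.Perm (Fin 6)} (hg : Resp g) (hh : Resp h) :
    s3s3Parity (g * h) = s3s3Parity g * s3s3Parity h := by
  rcases hg with hg | hg <;> rcases hh with hh | hh
  · have hgh : BPres (g * h) := by
      intro i; rw [Equiv.Perm.mul_apply]; have := hg (h i); have := hh i; tauto
    rw [parity_pres hgh, parity_pres hg, parity_pres hh, map_mul]
  · have hgh : BSwap (g * h) := by
      intro i; rw [Equiv.Perm.mul_apply]; have := hg (h i); have := hh i; tauto
    rw [parity_swap hgh, parity_pres hg, parity_swap hh, map_mul]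
    exact mul_left_comm _ _ _
  · have hgh : BSwap (g * h) := by
      intro i; rw [Equiv.Perm.mul_apply]; have := hg (h i); have := hh i; tauto
    rw [parity_swap hgh, parity_swap hg, parity_pres hh, map_mul, mul_assoc]
  · have hgh : BPres (g * h) := by
      intro i; rw [Equiv.Perm.mul_apply]; have := hg (h i); have := hh i; tauto
    rw [parity_pres hgh, parity_swap hg, parity_swap hh, map_mul,
      mul_mul_mul_comm, Int.units_mul_self, one_mul]

lemma no_bpres_222 {τ : Equiv.Perm (Fin 6)} (hc : τ.cycleType = {2, 2, 2})
    (hp : BPres τ) : False := by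
  have horder : orderOf τ = 2 := by
    rw [← Equiv.Perm.lcm_cycleType, hc]; decide
  have hsq : τ * τ = 1 := by
    have h := pow_orderOf_eq_one τ
    rwa [horder, pow_two] at h
  have hinv : ∀ i, τ (τ i) = i := by
    intro i
    have h : (τ * τ) i = (1 : Equiv.Perm (Fin 6)) i := by rw [hsq]
    simpa [Equiv.Perm.mul_apply] using h
  have hsupp : τ.support = Finset.univ := by
    apply Finset.eq_univ_of_card
    have h : τ.support.card = 6 := by
      rw [← Equiv.Perm.sum_cycleType, hc]; rfl
    simpa using h
  have hne : ∀ i, τ i ≠ i := fun i => Equiv.Perm.mem_support.mp (hsupp ▸ Finset.mem_univ i)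
  have v0 : (τ 0 : ℕ) < 3 := (hp 0).1 (by decide)
  have v1 : (τ 1 : ℕ) < 3 := (hp 1).1 (by decide)
  have v2 : (τ 2 : ℕ) < 3 := (hp 2).1 (by decide)
  have n0 : (τ 0 : ℕ) ≠ 0 := fun h => hne 0 (Fin.ext h)
  have n1 : (τ 1 : ℕ) ≠ 1 := fun h => hne 1 (Fin.ext h)
  have n2 : (τ 2 : ℕ) ≠ 2 := fun h => hne 2 (Fin.ext h)
  have hcase : (τ 0 : ℕ) = 1 ∨ (τ 0 : ℕ) = 2 := by omega
  rcases hcase with h01 | h02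
  · -- τ 0 = 1, so τ 1 = 0, and τ 2 has nowhere to go
    have e01 : τ 0 = 1 := Fin.ext h01
    have e10 : τ 1 = 0 := by have h := hinv 0; rwa [e01] at h
    have d21 : τ 2 ≠ τ 0 := fun h => by simpa using τ.injective h
    have d20 : τ 2 ≠ τ 1 := fun h => by simpa using τ.injective h
    rw [e01] at d21
    rw [e10] at d20
    have w1 : (τ 2 : ℕ) ≠ 1 := fun h => d21 (Fin.ext h)
    have w0 : (τ 2 : ℕ) ≠ 0 := fun h => d20 (Fin.ext h)
    omega
  · -- τ 0 = 2, so τ 2 = 0, and τ 1 has nowhere to go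
    have e02 : τ 0 = 2 := Fin.ext h02
    have e20 : τ 2 = 0 := by have h := hinv 0; rwa [e02] at h
    have d12 : τ 1 ≠ τ 0 := fun h => by simpa using τ.injective h
    have d10 : τ 1 ≠ τ 2 := fun h => by simpa using τ.injective h
    rw [e02] at d12
    rw [e20] at d10
    have w2 : (τ 1 : ℕ) ≠ 2 := fun h => d12 (Fin.ext h)
    have w0 : (τ 1 : ℕ) ≠ 0 := fun h => d10 (Fin.ext h)
    omega

lemma part1 (τ : Equiv.Perm (Fin 6)) (hτ : τ ∈ ccAut) (hc : τ.cycleType = {2, 2, 2}) :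
    s3s3Parity τ = 1 := by
  have hs : Equiv.Perm.sign τ = -1 := by
    rw [Equiv.Perm.sign_of_cycleType, hc]
    rfl
  rcases resp_mem hτ with hp | hw
  · exact absurd hp (fun h => no_bpres_222 hc h)
  · rw [parity_swap hw, sign_cfSwap, hs]
    rfl

lemma parity_aux :
    ∀ (l : List (Equiv.Perm (Fin 6))),
      (∀ x ∈ l, Resp x ∧ s3s3Parity x = 1) → ∀ φ : Equiv.Perm (Fin 6), Resp φ →
      Resp (l.prod * φ) ∧ s3s3Parity (l.prod * φ) = s3s3Parity φ := by
  intro l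
  induction l with
  | nil =>
    intro _ φ hφ
    rw [List.prod_nil, one_mul]
    exact ⟨hφ, rfl⟩
  | cons x xs ih =>
    intro hl φ hφ
    have hx := hl x List.mem_cons_self
    have ihh := ih (fun y hy => hl y (List.mem_cons_of_mem _ hy)) φ hφ
    rw [List.prod_cons, mul_assoc]
    refine ⟨resp_mul hx.1 ihh.1, ?_⟩
    rw [parity_mul hx.1 ihh.1, ihh.2, hx.2, one_mul]

/-- Every cycle-type-`[2,2,2]` element of `G` has even `S₃×S₃`-parity; every
cycle-type-`[3,3]` element of `G` that exchanges no labels between `{r,g,b}` and `{x,y,z}`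
has even `S₃×S₃`-parity; hence no sequence of multiplications by cycle-type-`[2,2,2]`
elements of `G` can connect an element of odd `S₃×S₃`-parity to one of even parity. -/
theorem s3s3Parity_reflections_even :
    (∀ τ ∈ ccAut, τ.cycleType = {2, 2, 2} → s3s3Parity τ = 1) ∧
      (∀ τ ∈ ccAut, τ.cycleType = {3, 3} →
        (∀ i : Fin 6, (i : ℕ) < 3 ↔ ((τ i : ℕ) < 3)) → s3s3Parity τ = 1) ∧
      (∀ l : List (Equiv.Perm (Fin 6)),
        (∀ x ∈ l, x ∈ ccAut ∧ x.cycleType = {2, 2, 2}) →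
        ∀ φ ∈ ccAut, s3s3Parity φ = -1 → s3s3Parity (l.prod * φ) = -1) := by
  refine ⟨part1, ?_, ?_⟩
  · intro τ _ hc hiff
    rw [parity_pres hiff, Equiv.Perm.sign_of_cycleType, hc]
    rfl
  · intro l hl φ hφ hpφ
    have h := parity_aux l
      (fun x hx => ⟨resp_mem (hl x hx).1, part1 x (hl x hx).1 (hl x hx).2⟩) φ (resp_mem hφ)
    rw [h.2, hpφ]
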